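/- A finite extension M/K of a perfect field K, with Galois closure M̃ and groups Gal(M̃/K) and Gal(M̃/M), is obtained by nontrivial strong general magnification from some subextension L/K if and only if there is an isomorphism Gal(M̃/K) ≅ A × B for nontrivial groups A and B under which Gal(M̃/M) corresponds to A' × B' for some subgroup A' ⊆ A with [A:A'] > 1 and some subgroup B' ⊆ B with [B:B'] > 1. -/

import Mathlib

open IntermediateField Module

section Defs

variable (K Kbar : Type*) [Field K] [Field Kbar] [Algebra K Kbar]

/-- The Galois closure inside the ambient field `Kbar` of an intermediate field `L` of
`Kbar / K`: the compositum of all the `K`-conjugates of `L` in `Kbar`. -/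
noncomputable def galClosure (L : IntermediateField K Kbar) : IntermediateField K Kbar :=
  ⨆ f : ↥L →ₐ[K] Kbar, f.fieldRange

/-- The subgroup `H = Gal(L̃/L)` of `G = Gal(L̃/K)`. -/
noncomputable def fixSub (L : IntermediateField K Kbar) :
    Subgroup (↥(galClosure K Kbar L) ≃ₐ[K] ↥(galClosure K Kbar L)) :=
  (IntermediateField.comap (galClosure K Kbar L).val L).fixingSubgroup

/-- The cluster size `r_K(L) = [N_G(H) : H]`. -/
noncomputable def clusterSize (L : IntermediateField K Kbar) : ℕ :=
  (fixSub K Kbar L).relIndex (Subgroup.normalizer (fixSub K Kbar L : Set (↥(galClosure K Kbar L) ≃ₐ[K] ↥(galClosure K Kbar L))))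

/-- The number of clusters `s_K(L) = [G : N_G(H)]`. -/
noncomputable def numClusters (L : IntermediateField K Kbar) : ℕ :=
  (Subgroup.normalizer (fixSub K Kbar L : Set (↥(galClosure K Kbar L) ≃ₐ[K] ↥(galClosure K Kbar L)))).index

/-- The ascending index `t_K(L) = [G : H^G]`. -/
noncomputable def ascIndex (L : IntermediateField K Kbar) : ℕ :=
  (Subgroup.normalClosure (fixSub K Kbar L :
      Set (↥(galClosure K Kbar L) ≃ₐ[K] ↥(galClosure K Kbar L)))).index

/-- The quantity `u_K(L) = [H^G : H]`. -/
noncomputable def uIndex (L : IntermediateField K Kbar) : ℕ :=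
  (fixSub K Kbar L).relIndex (Subgroup.normalClosure (fixSub K Kbar L :
      Set (↥(galClosure K Kbar L) ≃ₐ[K] ↥(galClosure K Kbar L))))

/-- `M/K` is obtained by strong cluster magnification from `L/K` through `F/K`. -/
def IsSCMvia (M L F : IntermediateField K Kbar) : Prop :=
  L ≤ M ∧ 2 < Module.finrank K ↥L ∧ FiniteDimensional K ↥F ∧ IsGalois K ↥F ∧
    galClosure K Kbar L ⊓ F = ⊥ ∧ L ⊔ F = M

/-- `M/K` is primitive: it is not obtained by a nontrivial strong cluster magnification
from any subextension over `K`. -/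
def IsPrimitive (M : IntermediateField K Kbar) : Prop :=
  ¬ ∃ L F : IntermediateField K Kbar, IsSCMvia K Kbar M L F ∧ F ≠ ⊥

/-- `M/K` is obtained by strong general magnification from `L/K` through `J/K`. -/
def IsSGMvia (M L J : IntermediateField K Kbar) : Prop :=
  L ≤ M ∧ 1 < Module.finrank K ↥L ∧ FiniteDimensional K ↥J ∧
    galClosure K Kbar L ⊓ galClosure K Kbar J = ⊥ ∧ L ⊔ J = M

/-- `M/K` is general primitive: not obtained by a nontrivial strong general magnification
from any subextension over `K`. -/
def IsGeneralPrimitive (M : IntermediateField K Kbar) : Prop :=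
  ¬ ∃ L J : IntermediateField K Kbar, IsSGMvia K Kbar M L J ∧ J ≠ ⊥

/-- `F/E` is a Galois pair of intermediate fields: `E ≤ F` and `F/E` is Galois. -/
def IsGaloisPair (E F : IntermediateField K Kbar) : Prop :=
  ∃ h : E ≤ F, IsGalois ↥E ↥(IntermediateField.extendScalars h)

/-- One step of the unique descending chain: `N'` is an intermediate field of `N/K` such
that `N/N'` is Galois of maximal possible degree. -/
def DescStep (N N' : IntermediateField K Kbar) : Prop :=
  N' ≤ N ∧ IsGaloisPair K Kbar N' N ∧
    ∀ N'' : IntermediateField K Kbar, N'' ≤ N → IsGaloisPair K Kbar N'' N →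
      Module.finrank K ↥N' ≤ Module.finrank K ↥N''

/-- One step of the unique ascending chain for `L/K`: `F'` is an intermediate field of
`L/F` such that `F'/F` is Galois of maximal possible degree. -/
def AscStep (L F F' : IntermediateField K Kbar) : Prop :=
  F ≤ F' ∧ F' ≤ L ∧ IsGaloisPair K Kbar F F' ∧
    ∀ F'' : IntermediateField K Kbar, F ≤ F'' → F'' ≤ L → IsGaloisPair K Kbar F F'' →
      Module.finrank K ↥F'' ≤ Module.finrank K ↥F'

/-- `E` occurs in the unique descending chain of `L/K`. -/
def InDescChain (L E : IntermediateField K Kbar) : Prop :=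
  Relation.ReflTransGen (DescStep K Kbar) L E

/-- `E` occurs in the unique ascending chain of `L/K`. -/
def InAscChain (L E : IntermediateField K Kbar) : Prop :=
  Relation.ReflTransGen (AscStep K Kbar L) ⊥ E

end Defs

section AuxLemmas

open scoped Pointwise


theorem rectLemma {G : Type*} [Group G] {A B A' B' : Subgroup G}
    (hAn : A.Normal) (hBn : B.Normal) (hd : Disjoint A B) (hA : A' ≤ A) (hB : B' ≤ B) :
    (A' ⊔ B) ⊓ (A ⊔ B') = A' ⊔ B' := by
  haveI := hAn; haveI := hBn
  refine le_antisymm ?_ (le_inf (sup_le_sup le_rfl hB) (sup_le_sup hA le_rfl))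
  intro x hx
  rw [Subgroup.mem_inf] at hx
  obtain ⟨h1, h2⟩ := hx
  rw [← SetLike.mem_coe, Subgroup.mul_normal A' B] at h1
  rw [← SetLike.mem_coe, Subgroup.normal_mul A B'] at h2
  obtain ⟨a', ha', b, hb, rfl⟩ := h1
  obtain ⟨a, ha, b', hb', hx⟩ := h2
  rw [SetLike.mem_coe] at ha' hb ha hb'
  simp only at hx
  have key : a⁻¹ * a' = b' * b⁻¹ := by
    rw [inv_mul_eq_iff_eq_mul, ← mul_assoc, hx, mul_assoc, mul_inv_cancel, mul_one]
  have hmem : a⁻¹ * a' ∈ A ⊓ B := Subgroup.mem_inf.mpr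
    ⟨mul_mem (inv_mem ha) (hA ha'), key ▸ mul_mem (hB hb') (inv_mem hb)⟩
  rw [hd.eq_bot, Subgroup.mem_bot] at hmem
  have hb2 : b = b' := by
    have h5 : b' * b⁻¹ = 1 := key ▸ hmem
    rw [mul_inv_eq_one] at h5; exact h5.symm
  exact Subgroup.mul_mem_sup ha' (hb2 ▸ hb')

theorem dedekindLemma {G : Type*} [Group G] {A B H : Subgroup G}
    (hAn : A.Normal) (hc : A ⊔ B = ⊤) (hBH : B ≤ H) :
    H = (H ⊓ A) ⊔ B := by
  haveI := hAn
  refine le_antisymm ?_ (sup_le inf_le_left hBH)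
  intro x hx
  have h0 : x ∈ A ⊔ B := hc ▸ Subgroup.mem_top x
  rw [← SetLike.mem_coe, Subgroup.normal_mul A B] at h0
  obtain ⟨a, ha, b, hb, rfl⟩ := h0
  rw [SetLike.mem_coe] at ha hb
  have haH : a ∈ H := by
    have h6 : a * b * b⁻¹ ∈ H := mul_mem hx (inv_mem (hBH hb))
    simpa using h6
  exact Subgroup.mul_mem_sup ⟨haH, ha⟩ hb

section FixLemmas

variable {F E : Type*} [Field F] [Field E] [Algebra F E]

theorem fixingSubgroup_sup' (E1 E2 : IntermediateField F E) :
    (E1 ⊔ E2).fixingSubgroup = E1.fixingSubgroup ⊓ E2.fixingSubgroup := by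
  refine le_antisymm (le_inf (IntermediateField.fixingSubgroup_antitone le_sup_left)
    (IntermediateField.fixingSubgroup_antitone le_sup_right)) ?_
  rw [← IntermediateField.le_iff_le]
  exact sup_le ((IntermediateField.le_iff_le _ _).mpr inf_le_left)
    ((IntermediateField.le_iff_le _ _).mpr inf_le_right)

theorem fixingSubgroup_top' : (⊤ : IntermediateField F E).fixingSubgroup = ⊥ := by
  ext g
  simp only [Subgroup.mem_bot, IntermediateField.mem_fixingSubgroup_iff]
  exact ⟨fun h => AlgEquiv.ext fun x => h x trivial, fun h x _ => h ▸ rfl⟩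

theorem fixingSubgroup_bot' : (⊥ : IntermediateField F E).fixingSubgroup = ⊤ := by
  rw [eq_top_iff]
  intro g _
  rw [IntermediateField.mem_fixingSubgroup_iff]
  intro x hx
  rw [IntermediateField.mem_bot] at hx
  obtain ⟨y, rfl⟩ := hx
  exact g.commutes y

theorem fixedField_bot' : fixedField (⊥ : Subgroup (E ≃ₐ[F] E)) = ⊤ :=
  le_antisymm le_top ((IntermediateField.le_iff_le _ _).mpr bot_le)

theorem fixedField_antitone' {X Y : Subgroup (E ≃ₐ[F] E)} (h : X ≤ Y) :
    fixedField Y ≤ fixedField X :=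
  (IntermediateField.le_iff_le _ _).mpr
    (h.trans ((IntermediateField.le_iff_le Y (fixedField Y)).mp le_rfl))

theorem fixedField_sup' (X Y : Subgroup (E ≃ₐ[F] E)) :
    fixedField (X ⊔ Y) = fixedField X ⊓ fixedField Y := by
  refine le_antisymm (le_inf (fixedField_antitone' le_sup_left)
    (fixedField_antitone' le_sup_right)) ?_
  rw [IntermediateField.le_iff_le]
  refine sup_le ?_ ?_ <;> rw [← IntermediateField.le_iff_le] <;>
    [exact inf_le_left; exact inf_le_right]

variable [FiniteDimensional F E]

theorem fixedField_top' [IsGalois F E] :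
    fixedField (⊤ : Subgroup (E ≃ₐ[F] E)) = ⊥ := by
  conv_lhs => rw [← fixingSubgroup_bot' (F := F) (E := E)]
  exact IsGalois.fixedField_fixingSubgroup ⊥

theorem fixedField_inf' [IsGalois F E] (X Y : Subgroup (E ≃ₐ[F] E)) :
    fixedField (X ⊓ Y) = fixedField X ⊔ fixedField Y := by
  conv_lhs => rw [← IntermediateField.fixingSubgroup_fixedField X,
    ← IntermediateField.fixingSubgroup_fixedField Y, ← fixingSubgroup_sup',
    IsGalois.fixedField_fixingSubgroup]

end FixLemmas

section ComapLemmas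

variable {K Kbar : Type*} [Field K] [Field Kbar] [Algebra K Kbar]
variable (N : IntermediateField K Kbar)

theorem comap_map_val' (E' : IntermediateField K ↥N) : comap N.val (map N.val E') = E' := by
  apply SetLike.coe_injective
  show N.val ⁻¹' (N.val '' E') = E'
  exact Set.preimage_image_eq _ N.val.injective

theorem map_comap_val' {E : IntermediateField K Kbar} (h : E ≤ N) :
    map N.val (comap N.val E) = E := by
  apply SetLike.coe_injective
  show N.val '' (N.val ⁻¹' E) = E
  rw [Set.image_preimage_eq_inter_range, IntermediateField.coe_val, Subtype.range_coe]
  exact Set.inter_eq_self_of_subset_left h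

theorem comap_val_bot' : comap N.val ⊥ = ⊥ := by
  conv_lhs => rw [← IntermediateField.map_bot N.val]
  exact comap_map_val' N ⊥

theorem comap_val_self' : comap N.val N = ⊤ := by
  rw [eq_top_iff]; exact fun x _ => x.2

theorem comap_val_mono' {E E' : IntermediateField K Kbar} (h : E ≤ E') :
    comap N.val E ≤ comap N.val E' := fun x hx => h hx

theorem comap_val_inf' (E E' : IntermediateField K Kbar) :
    comap N.val (E ⊓ E') = comap N.val E ⊓ comap N.val E' := rfl

theorem comap_val_sup' {E E' : IntermediateField K Kbar} (hE : E ≤ N) (hE' : E' ≤ N) :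
    comap N.val (E ⊔ E') = comap N.val E ⊔ comap N.val E' := by
  rw [← comap_map_val' N (comap N.val E ⊔ comap N.val E'), IntermediateField.map_sup,
    map_comap_val' N hE, map_comap_val' N hE', ]

theorem finrank_map_val' (E' : IntermediateField K ↥N) :
    finrank K ↥(map N.val E') = finrank K ↥E' :=
  ((equivMap E' N.val).toLinearEquiv.finrank_eq).symm

end ComapLemmas

section GalLemmas

variable {K Kbar : Type*} [Field K] [Field Kbar] [Algebra K Kbar]

theorem galClosure_eq_normalClosure (L : IntermediateField K Kbar) :
    galClosure K Kbar L = normalClosure K ↥L Kbar := rfl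

theorem le_galClosure (L : IntermediateField K Kbar) : L ≤ galClosure K Kbar L :=
  IntermediateField.le_normalClosure L

theorem normal_galClosure [Normal K Kbar] (L : IntermediateField K Kbar) :
    Normal K ↥(galClosure K Kbar L) :=
  normalClosure.normal K ↥L Kbar

theorem fd_galClosure (L : IntermediateField K Kbar) [FiniteDimensional K ↥L] :
    FiniteDimensional K ↥(galClosure K Kbar L) :=
  normalClosure.is_finiteDimensional K ↥L Kbar

variable [Normal K Kbar]

theorem galClosure_mono {L L' : IntermediateField K Kbar} (h : L ≤ L') :
    galClosure K Kbar L ≤ galClosure K Kbar L' :=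
  IntermediateField.normalClosure_mono L L' h

theorem galClosure_le {L E : IntermediateField K Kbar} (h : L ≤ E) (hE : Normal K ↥E) :
    galClosure K Kbar L ≤ E := by
  rw [galClosure_eq_normalClosure, IntermediateField.normalClosure_def']
  exact iSup_le fun f => (IntermediateField.map_mono f h).trans
    (IntermediateField.normal_iff_forall_map_le.mp hE f)

theorem galClosure_sup (L J : IntermediateField K Kbar) :
    galClosure K Kbar (L ⊔ J) = galClosure K Kbar L ⊔ galClosure K Kbar J := by
  refine le_antisymm ?_ (sup_le (galClosure_mono le_sup_left) (galClosure_mono le_sup_right))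
  haveI := normal_galClosure L
  haveI := normal_galClosure J
  exact galClosure_le (sup_le ((le_galClosure L).trans le_sup_left)
    ((le_galClosure J).trans le_sup_right)) inferInstance

theorem galClosure_stable (L : IntermediateField K Kbar) (σ : Kbar ≃ₐ[K] Kbar) :
    map ↑σ (galClosure K Kbar L) = galClosure K Kbar L :=
  IntermediateField.normal_iff_forall_map_eq'.mp (normal_galClosure L) σ

end GalLemmas

section Backbone

variable {K Kbar : Type*} [Field K] [Field Kbar] [Algebra K Kbar] [Normal K Kbar]
variable (N : IntermediateField K Kbar)

theorem comap_galClosure_stable (hN : Normal K ↥N) (L : IntermediateField K Kbar)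
    (τ : ↥N ≃ₐ[K] ↥N) {x : ↥N} (hx : x ∈ comap N.val (galClosure K Kbar L)) :
    τ x ∈ comap N.val (galClosure K Kbar L) := by
  haveI := hN
  have hcomm : (N.val (τ x)) = (τ.liftNormal Kbar) (N.val x) := by
    have := AlgEquiv.liftNormal_commutes τ Kbar x
    simpa [IntermediateField.algebraMap_apply] using this.symm
  show N.val (τ x) ∈ galClosure K Kbar L
  rw [hcomm, ← galClosure_stable L (τ.liftNormal Kbar)]
  exact ⟨N.val x, hx, rfl⟩

theorem map_fixedField_le {F E : Type*} [Field F] [Field E] [Algebra F E]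
    [FiniteDimensional F E] [IsGalois F E] (σ : E ≃ₐ[F] E) {B X : Subgroup (E ≃ₐ[F] E)}
    (hBn : B.Normal) (hBX : B ≤ X) :
    (fixedField X).map ↑σ ≤ fixedField B := by
  haveI := hBn
  have h1 : ((fixedField X).map ↑σ).fixingSubgroup = MulAut.conj σ • X := by
    rw [IsGalois.map_fixingSubgroup, IntermediateField.fixingSubgroup_fixedField]
  have h2 : (fixedField X).map ↑σ = fixedField (MulAut.conj σ • X) := by
    rw [← h1, IsGalois.fixedField_fixingSubgroup]
  rw [h2]
  have h3 : MulAut.conj σ • B ≤ MulAut.conj σ • X := by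
    intro x hx
    rw [Subgroup.mem_pointwise_smul_iff_inv_smul_mem] at hx ⊢
    exact hBX hx
  have h4 : MulAut.conj σ • B = B := Subgroup.Normal.conj_smul_eq_self σ B
  exact fixedField_antitone' (h4 ▸ h3)

theorem galClosure_le_map_fixedField (hN : Normal K ↥N) [FiniteDimensional K ↥N]
    [IsGalois K ↥N] {B X : Subgroup (↥N ≃ₐ[K] ↥N)} (hBn : B.Normal) (hBX : B ≤ X) :
    galClosure K Kbar (map N.val (fixedField X)) ≤ map N.val (fixedField B) := by
  haveI := hN
  apply iSup_le
  intro f y hy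
  obtain ⟨x, rfl⟩ := AlgHom.mem_fieldRange.mp hy
  have h1 : f x = (f.liftNormal Kbar) ↑x := (AlgHom.liftNormal_commutes f Kbar x).symm
  obtain ⟨τ, hτ⟩ : ∃ τ : ↥N ≃ₐ[K] ↥N, ∀ w : ↥N, (↑(τ w) : Kbar) = (f.liftNormal Kbar) ↑w := by
    have hbij : Function.Bijective (f.liftNormal Kbar) :=
      AlgHom.normal_bijective K Kbar Kbar _
    refine ⟨(AlgEquiv.ofBijective _ hbij).restrictNormal ↥N, fun w => ?_⟩
    exact AlgEquiv.restrictNormal_commutes (AlgEquiv.ofBijective _ hbij) ↥N w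
  obtain ⟨z, hz, hzx⟩ := x.2
  have h2 : (f.liftNormal Kbar) ↑x = ↑(τ z) := by rw [← hzx]; exact (hτ z).symm
  have hmem : τ z ∈ fixedField B :=
    map_fixedField_le τ hBn hBX ⟨z, hz, rfl⟩
  exact ⟨τ z, hmem, by rw [h1, h2]; rfl⟩

end Backbone

section MoreHelpers

variable {K Kbar : Type*} [Field K] [Field Kbar] [Algebra K Kbar]

theorem normal_comap_val (N : IntermediateField K Kbar) {E : IntermediateField K Kbar}
    (h : E ≤ N) (hE : Normal K ↥E) : Normal K ↥(comap N.val E) := by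
  haveI := hE
  exact Normal.of_algEquiv
    (((equivMap (comap N.val E) N.val).trans (equivOfEq (map_comap_val' N h))).symm)

theorem fixSub_eq (M : IntermediateField K Kbar) :
    fixSub K Kbar M = (comap (galClosure K Kbar M).val M).fixingSubgroup := rfl

end MoreHelpers

end AuxLemmas


/-- A finite extension `M/K` of a perfect field `K` is obtained by a
nontrivial strong general magnification from some subextension `L/K` if and only if
`Gal(M̃/K)` decomposes as a direct product of two nontrivial (normal) factors `A × B` under
which `Gal(M̃/M)` corresponds to `A' × B'` for subgroups `A' ⊆ A`, `B' ⊆ B` with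
`[A:A'] > 1` and `[B:B'] > 1`. -/
theorem strong_general_magnification_criterion
    (K Kbar : Type*) [Field K] [PerfectField K] [Field Kbar] [Algebra K Kbar]
    [IsAlgClosure K Kbar]
    (M : IntermediateField K Kbar) [FiniteDimensional K ↥M] :
    (∃ L J : IntermediateField K Kbar, IsSGMvia K Kbar M L J ∧ J ≠ ⊥) ↔
    (∃ A B : Subgroup (↥(galClosure K Kbar M) ≃ₐ[K] ↥(galClosure K Kbar M)),
      A.Normal ∧ B.Normal ∧ IsCompl A B ∧ A ≠ ⊥ ∧ B ≠ ⊥ ∧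
      ∃ A' B' : Subgroup (↥(galClosure K Kbar M) ≃ₐ[K] ↥(galClosure K Kbar M)),
        A' ≤ A ∧ B' ≤ B ∧ 1 < A'.relIndex A ∧ 1 < B'.relIndex B ∧
        A' ⊔ B' = fixSub K Kbar M) := by
  classical
  haveI hNfd : FiniteDimensional K ↥(galClosure K Kbar M) := fd_galClosure M
  haveI hNnorm : Normal K ↥(galClosure K Kbar M) := normal_galClosure M
  haveI hNgal : IsGalois K ↥(galClosure K Kbar M) := ⟨⟩
  have hMN : M ≤ galClosure K Kbar M := le_galClosure M
  constructor
  · rintro ⟨L, J, ⟨hLM, hL1, hJfd, hdisj, hLJ⟩, hJbot⟩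
    have hJM : J ≤ M := le_sup_right.trans hLJ.le
    have hLN : L ≤ galClosure K Kbar M := hLM.trans hMN
    have hJN : J ≤ galClosure K Kbar M := hJM.trans hMN
    have hgLN : galClosure K Kbar L ≤ galClosure K Kbar M := galClosure_mono hLM
    have hgJN : galClosure K Kbar J ≤ galClosure K Kbar M := galClosure_mono hJM
    set N := galClosure K Kbar M with hNdef
    set Lt := comap N.val (galClosure K Kbar L) with hLtdef
    set Jt := comap N.val (galClosure K Kbar J) with hJtdef
    set Lc := comap N.val L with hLcdef
    set Jc := comap N.val J with hJcdef
    have hLcLt : Lc ≤ Lt := comap_val_mono' N (le_galClosure L)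
    have hJcJt : Jc ≤ Jt := comap_val_mono' N (le_galClosure J)
    have hsupt : Lt ⊔ Jt = ⊤ := by
      rw [hLtdef, hJtdef, ← comap_val_sup' N hgLN hgJN, ← galClosure_sup, hLJ, comap_val_self']
    have hinft : Lt ⊓ Jt = ⊥ := by
      rw [hLtdef, hJtdef, ← comap_val_inf', hdisj, comap_val_bot']
    haveI : Normal K ↥Lt := normal_comap_val N hgLN (normal_galClosure L)
    haveI : Normal K ↥Jt := normal_comap_val N hgJN (normal_galClosure J)
    haveI : IsGalois K ↥Lt := ⟨⟩
    haveI : IsGalois K ↥Jt := ⟨⟩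
    have hAn : Jt.fixingSubgroup.Normal := inferInstance
    have hBn : Lt.fixingSubgroup.Normal := inferInstance
    have hdisjAB : Disjoint Jt.fixingSubgroup Lt.fixingSubgroup := by
      rw [disjoint_iff, ← fixingSubgroup_sup', sup_comm, hsupt, fixingSubgroup_top']
    have hcodisAB : Jt.fixingSubgroup ⊔ Lt.fixingSubgroup = ⊤ := by
      have h5 : fixedField (Jt.fixingSubgroup ⊔ Lt.fixingSubgroup) = ⊥ := by
        rw [fixedField_sup', IsGalois.fixedField_fixingSubgroup,
          IsGalois.fixedField_fixingSubgroup, inf_comm, hinft]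
      rw [← IntermediateField.fixingSubgroup_fixedField
        (Jt.fixingSubgroup ⊔ Lt.fixingSubgroup), h5, fixingSubgroup_bot']
    have hLtbot : ¬ (Lt = ⊥) := by
      intro h0
      have h6 : galClosure K Kbar L = ⊥ := by
        rw [← map_comap_val' N hgLN, ← hLtdef, h0, IntermediateField.map_bot]
      have h7 : L = ⊥ := le_bot_iff.mp ((le_galClosure L).trans h6.le)
      rw [h7, IntermediateField.finrank_bot] at hL1
      exact absurd hL1 (lt_irrefl 1)
    have hJtbot : ¬ (Jt = ⊥) := by
      intro h0
      have h6 : galClosure K Kbar J = ⊥ := by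
        rw [← map_comap_val' N hgJN, ← hJtdef, h0, IntermediateField.map_bot]
      exact hJbot (le_bot_iff.mp ((le_galClosure J).trans h6.le))
    have hLcbot : ¬ (Lc ≤ ⊥) := by
      intro h0
      have h7 : L = ⊥ := by
        rw [← map_comap_val' N hLN, ← hLcdef]
        exact le_bot_iff.mp ((IntermediateField.map_mono N.val h0).trans
          (IntermediateField.map_bot N.val).le)
      rw [h7, IntermediateField.finrank_bot] at hL1
      exact absurd hL1 (lt_irrefl 1)
    have hJcbot : ¬ (Jc ≤ ⊥) := by
      intro h0
      refine hJbot ?_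
      rw [← map_comap_val' N hJN, ← hJcdef]
      exact le_bot_iff.mp ((IntermediateField.map_mono N.val h0).trans
        (IntermediateField.map_bot N.val).le)
    refine ⟨Jt.fixingSubgroup, Lt.fixingSubgroup, hAn, hBn,
      ⟨hdisjAB, codisjoint_iff.mpr hcodisAB⟩, ?_, ?_,
      (Lc ⊔ Jt).fixingSubgroup, (Lt ⊔ Jc).fixingSubgroup,
      IntermediateField.fixingSubgroup_antitone le_sup_right,
      IntermediateField.fixingSubgroup_antitone le_sup_left, ?_, ?_, ?_⟩
    · intro h0
      have hJt : Jt = ⊤ := by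
        rw [← IsGalois.fixedField_fixingSubgroup Jt, h0, fixedField_bot']
      exact hLtbot (by rw [← hinft, hJt, inf_top_eq])
    · intro h0
      have hLt : Lt = ⊤ := by
        rw [← IsGalois.fixedField_fixingSubgroup Lt, h0, fixedField_bot']
      exact hJtbot (by rw [← hinft, hLt, top_inf_eq])
    · haveI : Finite (↥N ≃ₐ[K] ↥N) := inferInstance
      have ne0 : ((Lc ⊔ Jt).fixingSubgroup.relIndex Jt.fixingSubgroup) ≠ 0 :=
        Subgroup.index_ne_zero_of_finite
      have ne1 : ((Lc ⊔ Jt).fixingSubgroup.relIndex Jt.fixingSubgroup) ≠ 1 := by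
        intro h1
        have h2 : Jt.fixingSubgroup ≤ (Lc ⊔ Jt).fixingSubgroup :=
          Subgroup.relIndex_eq_one.mp h1
        have h3 : Lc ⊔ Jt ≤ Jt := by
          have h4 := fixedField_antitone' h2
          rwa [IsGalois.fixedField_fixingSubgroup, IsGalois.fixedField_fixingSubgroup] at h4
        exact hLcbot (by rw [← hinft]; exact le_inf hLcLt (le_sup_left.trans h3))
      omega
    · haveI : Finite (↥N ≃ₐ[K] ↥N) := inferInstance
      have ne0 : ((Lt ⊔ Jc).fixingSubgroup.relIndex Lt.fixingSubgroup) ≠ 0 :=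
        Subgroup.index_ne_zero_of_finite
      have ne1 : ((Lt ⊔ Jc).fixingSubgroup.relIndex Lt.fixingSubgroup) ≠ 1 := by
        intro h1
        have h2 : Lt.fixingSubgroup ≤ (Lt ⊔ Jc).fixingSubgroup :=
          Subgroup.relIndex_eq_one.mp h1
        have h3 : Lt ⊔ Jc ≤ Lt := by
          have h4 := fixedField_antitone' h2
          rwa [IsGalois.fixedField_fixingSubgroup, IsGalois.fixedField_fixingSubgroup] at h4
        exact hJcbot (by rw [← hinft]; exact le_inf (le_sup_right.trans h3) hJcJt)
      omega
    · show (Lc ⊔ Jt).fixingSubgroup ⊔ (Lt ⊔ Jc).fixingSubgroup = (comap N.val M).fixingSubgroup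
      have hMc : comap N.val M = Lc ⊔ Jc := by
        rw [hLcdef, hJcdef, ← comap_val_sup' N hLN hJN, hLJ]
      rw [hMc, fixingSubgroup_sup' Lc Jc]
      have hfixLc : Lc.fixingSubgroup = (Lc ⊔ Jt).fixingSubgroup ⊔ Lt.fixingSubgroup := by
        have hd := dedekindLemma hAn hcodisAB (IntermediateField.fixingSubgroup_antitone hLcLt)
        rwa [← fixingSubgroup_sup'] at hd
      have hfixJc : Jc.fixingSubgroup = (Lt ⊔ Jc).fixingSubgroup ⊔ Jt.fixingSubgroup := by
        have hd := dedekindLemma hBn (by rw [sup_comm]; exact hcodisAB)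
          (IntermediateField.fixingSubgroup_antitone hJcJt)
        rwa [← fixingSubgroup_sup', sup_comm Jc Lt] at hd
      rw [hfixLc, hfixJc, sup_comm ((Lt ⊔ Jc).fixingSubgroup) Jt.fixingSubgroup]
      exact (rectLemma hAn hBn hdisjAB (IntermediateField.fixingSubgroup_antitone le_sup_right)
        (IntermediateField.fixingSubgroup_antitone le_sup_left)).symm
  · set N := galClosure K Kbar M with hNdef
    rintro ⟨A, B, hAn, hBn, hcompl, hA0, hB0, A', B', hA'A, hB'B, hrA, hrB, hsup⟩
    have hdisjAB : Disjoint A B := hcompl.disjoint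
    have hMc : comap N.val M = fixedField (A' ⊔ B') := by
      rw [hsup]
      exact (IsGalois.fixedField_fixingSubgroup _).symm
    refine ⟨map N.val (fixedField (A' ⊔ B)), map N.val (fixedField (A ⊔ B')),
      ⟨?_, ?_, ?_, ?_, ?_⟩, ?_⟩
    · calc map N.val (fixedField (A' ⊔ B))
          ≤ map N.val (fixedField (A' ⊔ B')) :=
            IntermediateField.map_mono _ (fixedField_antitone' (sup_le_sup le_rfl hB'B))
        _ = map N.val (comap N.val M) := by rw [hMc]
        _ = M := map_comap_val' N hMN
    · rw [finrank_map_val']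
      have hne0 : 0 < finrank K ↥(fixedField (A' ⊔ B)) := finrank_pos
      have hne1 : finrank K ↥(fixedField (A' ⊔ B)) ≠ 1 := by
        intro h1
        have h2 : fixedField (A' ⊔ B) = ⊥ := IntermediateField.finrank_eq_one_iff.mp h1
        have h3 : A' ⊔ B = ⊤ := by
          rw [← IntermediateField.fixingSubgroup_fixedField (A' ⊔ B), h2, fixingSubgroup_bot']
        have h4 := rectLemma hAn hBn hdisjAB hA'A (bot_le : (⊥ : Subgroup _) ≤ B)
        rw [h3, sup_bot_eq, sup_bot_eq, top_inf_eq] at h4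
        rw [Subgroup.relIndex_eq_one.mpr h4.le] at hrA
        exact absurd hrA (lt_irrefl 1)
      exact lt_of_le_of_ne hne0 (Ne.symm hne1)
    · exact (equivMap (fixedField (A ⊔ B')) N.val).toLinearEquiv.finiteDimensional
    · have hL' := galClosure_le_map_fixedField N hNnorm hBn (le_sup_right : B ≤ A' ⊔ B)
      have hJ' := galClosure_le_map_fixedField N hNnorm hAn (le_sup_left : A ≤ A ⊔ B')
      refine le_bot_iff.mp (le_trans (inf_le_inf hL' hJ') ?_)
      rw [← IntermediateField.map_inf, ← fixedField_sup', sup_comm B A,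
        hcompl.codisjoint.eq_top, fixedField_top', IntermediateField.map_bot]
    · rw [← IntermediateField.map_sup, ← fixedField_inf',
        rectLemma hAn hBn hdisjAB hA'A hB'B, ← hMc, map_comap_val' N hMN]
    · intro h0
      have h2 : fixedField (A ⊔ B') = ⊥ := by
        rw [← comap_map_val' N (fixedField (A ⊔ B')), h0, comap_val_bot']
      have h3 : A ⊔ B' = ⊤ := by
        rw [← IntermediateField.fixingSubgroup_fixedField (A ⊔ B'), h2, fixingSubgroup_bot']
      have h4 := rectLemma hAn hBn hdisjAB (bot_le : (⊥ : Subgroup _) ≤ A) hB'B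
      rw [h3, bot_sup_eq, bot_sup_eq, inf_top_eq] at h4
      rw [Subgroup.relIndex_eq_one.mpr h4.le] at hrB
      exact absurd hrB (lt_irrefl 1)
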